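/- For any LTL-style formulas ψ (depending on a parameter x from a nonempty domain D) and φ (not depending on x), the formula '(∃x. ψ) Release φ' is semantically equivalent to '∃x. (ψ Release φ)'. Here Release is defined as the dual of Until: σ ⊨ α R β iff ¬(σ ⊨ (¬α) U (¬β)), i.e., for all j, either β holds at the j-th suffix or there exists k < j where α holds at the k-th suffix. -/
import Mathlib

/-- Suffix of a trace. -/
def shift {S : Type*} (σ : ℕ → S) (n : ℕ) : ℕ → S := fun k => σ (n + k)

/-- Release commutes with existential quantification in its first argument:
    `(∃x. ψ) R φ ≡ ∃x. (ψ R φ)`. -/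
theorem release_exists_comm {S D : Type*} [Nonempty D]
    (ψ : D → (ℕ → S) → Prop) (φ : (ℕ → S) → Prop) (σ : ℕ → S) :
    (∀ j, φ (shift σ j) ∨ ∃ k < j, ∃ d : D, ψ d (shift σ k)) ↔
      (∃ d : D, ∀ j, φ (shift σ j) ∨ ∃ k < j, ψ d (shift σ k)) := by
  constructor
  · intro h
    by_cases hall : ∀ j, φ (shift σ j)
    · exact ⟨Classical.arbitrary D, fun j => Or.inl (hall j)⟩
    · push_neg at hall
      classical
      have hex : ∃ j, ¬ φ (shift σ j) := hall
      set j₀ := Nat.find hex with hdef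
      have hj₀ : ¬ φ (shift σ j₀) := Nat.find_spec hex
      have hmin : ∀ m, m < j₀ → ¬ ¬ φ (shift σ m) := fun m hm => Nat.find_min hex hm
      rcases h j₀ with hφ | ⟨k, hk, d, hψ⟩
      · exact absurd hφ hj₀
      · refine ⟨d, fun j => ?_⟩
        by_cases hφ : φ (shift σ j)
        · exact Or.inl hφ
        · have : j₀ ≤ j := le_of_not_gt fun hlt => hmin j hlt hφ
          exact Or.inr ⟨k, lt_of_lt_of_le hk this, hψ⟩
  · rintro ⟨d, h⟩ j
    rcases h j with hφ | ⟨k, hk, hψ⟩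
    · exact Or.inl hφ
    · exact Or.inr ⟨k, hk, d, hψ⟩
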